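/- For every positive even integer ℓ, the repunit r_ℓ = (10^ℓ − 1)/9 is divisible by 121 if and only if ℓ/2 is divisible by 11. -/

import Mathlib

lemma pow10_mod_1089 (ℓ : ℕ) : 10 ^ ℓ % 1089 = 10 ^ (ℓ % 22) % 1089 := by
  conv_lhs => rw [← Nat.div_add_mod ℓ 22, pow_add, pow_mul]
  rw [Nat.mul_mod, Nat.pow_mod]
  norm_num

theorem repunit_dvd_121_iff (ℓ : ℕ) (hℓ : 0 < ℓ) (he : Even ℓ) :
    121 ∣ (10 ^ ℓ - 1) / 9 ↔ 11 ∣ ℓ / 2 := by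
  have h9 : 9 ∣ 10 ^ ℓ - 1 := by
    simpa using Nat.sub_dvd_pow_sub_pow 10 1 ℓ
  rw [Nat.dvd_div_iff_mul_dvd h9]
  have h1 : (1:ℕ) ≤ 10 ^ ℓ := Nat.one_le_pow _ _ (by norm_num)
  have key : (9 * 121 ∣ 10 ^ ℓ - 1) ↔ 22 ∣ ℓ := by
    rw [show (9*121 : ℕ) = 1089 from rfl, ← Nat.modEq_iff_dvd' h1]
    unfold Nat.ModEq
    rw [pow10_mod_1089]
    constructor
    · intro h
      have hr : ∀ r < 22, 1 % 1089 = 10 ^ r % 1089 → r = 0 := by decide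
      exact Nat.dvd_of_mod_eq_zero (hr _ (Nat.mod_lt _ (by norm_num)) h)
    · intro h
      obtain ⟨k, rfl⟩ := h
      simp [Nat.mul_mod_right]
  rw [key]
  obtain ⟨m, rfl⟩ := he
  omega
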